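/- arXiv:2301.07275 — 2 statements merged into one kernel-verified Lean document; each statement's English description precedes it below -/
import Mathlib

section
/- Let F⁻¹ : [0,1] → ℝ be continuous and nondecreasing, let 0 = τ_0 < τ_1 < ... < τ_N = 1 and τ̂_i = (τ_i + τ_{i+1})/2. Define W(τ_1,...,τ_{N-1}) = ∑_{i=0}^{N-1} ∫_{τ_i}^{τ_{i+1}} |F⁻¹(θ) - F⁻¹(τ̂_i)| dθ. If F⁻¹ is differentiable at the relevant points, then ∂W/∂τ_i = 2F⁻¹(τ_i) - F⁻¹(τ̂_i) - F⁻¹(τ̂_{i-1}) for each interior index 1 ≤ i ≤ N-1. -/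
open intervalIntegral

private lemma finv_intInt (Finv : ℝ → ℝ) (hFc : ContinuousOn Finv (Set.Icc 0 1))
    {c d : ℝ} (hc : c ∈ Set.Icc (0:ℝ) 1) (hd : d ∈ Set.Icc (0:ℝ) 1) :
    IntervalIntegrable Finv MeasureTheory.volume c d := by
  apply ContinuousOn.intervalIntegrable
  apply hFc.mono
  rw [show Set.Icc (0:ℝ) 1 = Set.uIcc 0 1 from (Set.uIcc_of_le zero_le_one).symm]
  exact Set.uIcc_subset_uIcc (by rwa [Set.uIcc_of_le zero_le_one]) (by rwa [Set.uIcc_of_le zero_le_one])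

private lemma abs_integral_split (Finv : ℝ → ℝ) (hFc : ContinuousOn Finv (Set.Icc 0 1))
    (hFm : MonotoneOn Finv (Set.Icc 0 1)) {c d : ℝ} (h0 : 0 ≤ c) (hcd : c ≤ d) (hd1 : d ≤ 1) :
    ∫ θ in c..d, |Finv θ - Finv ((c + d) / 2)| =
      (∫ θ in c..d, Finv θ) - 2 * ∫ θ in c..((c + d) / 2), Finv θ := by
  set m := (c + d) / 2 with hm
  have hcm : c ≤ m := by simp only [hm]; linarith
  have hmd : m ≤ d := by simp only [hm]; linarith
  have hmIcc : m ∈ Set.Icc (0:ℝ) 1 := ⟨by linarith, by linarith⟩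
  have hcIcc : c ∈ Set.Icc (0:ℝ) 1 := ⟨h0, by linarith⟩
  have hdIcc : d ∈ Set.Icc (0:ℝ) 1 := ⟨by linarith, hd1⟩
  have habs : ContinuousOn (fun θ => |Finv θ - Finv m|) (Set.Icc 0 1) :=
    (hFc.sub continuousOn_const).abs
  have hIcm : IntervalIntegrable (fun θ => |Finv θ - Finv m|) MeasureTheory.volume c m := by
    apply ContinuousOn.intervalIntegrable
    apply habs.mono
    rw [Set.uIcc_of_le hcm]
    exact Set.Icc_subset_Icc h0 hmIcc.2
  have hImd : IntervalIntegrable (fun θ => |Finv θ - Finv m|) MeasureTheory.volume m d := by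
    apply ContinuousOn.intervalIntegrable
    apply habs.mono
    rw [Set.uIcc_of_le hmd]
    exact Set.Icc_subset_Icc hmIcc.1 hd1
  have hsplit := intervalIntegral.integral_add_adjacent_intervals hIcm hImd
  have h1 : ∫ θ in c..m, |Finv θ - Finv m| = ∫ θ in c..m, (Finv m - Finv θ) := by
    apply intervalIntegral.integral_congr
    intro θ hθ
    rw [Set.uIcc_of_le hcm] at hθ
    have hθIcc : θ ∈ Set.Icc (0:ℝ) 1 := ⟨by linarith [hθ.1], by linarith [hθ.2, hmIcc.2]⟩
    have : Finv θ ≤ Finv m := hFm hθIcc hmIcc hθ.2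
    show |Finv θ - Finv m| = Finv m - Finv θ
    rw [abs_sub_comm, abs_of_nonneg (by linarith)]
  have h2 : ∫ θ in m..d, |Finv θ - Finv m| = ∫ θ in m..d, (Finv θ - Finv m) := by
    apply intervalIntegral.integral_congr
    intro θ hθ
    rw [Set.uIcc_of_le hmd] at hθ
    have hθIcc : θ ∈ Set.Icc (0:ℝ) 1 := ⟨by linarith [hθ.1, hmIcc.1], by linarith [hθ.2]⟩
    have : Finv m ≤ Finv θ := hFm hmIcc hθIcc hθ.1
    show |Finv θ - Finv m| = Finv θ - Finv m
    rw [abs_of_nonneg (by linarith)]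
  have h3 : ∫ θ in c..m, (Finv m - Finv θ) = (m - c) * Finv m - ∫ θ in c..m, Finv θ := by
    rw [intervalIntegral.integral_sub intervalIntegrable_const (finv_intInt Finv hFc hcIcc hmIcc),
      intervalIntegral.integral_const, smul_eq_mul]
  have h4 : ∫ θ in m..d, (Finv θ - Finv m) = (∫ θ in m..d, Finv θ) - (d - m) * Finv m := by
    rw [intervalIntegral.integral_sub (finv_intInt Finv hFc hmIcc hdIcc) intervalIntegrable_const,
      intervalIntegral.integral_const, smul_eq_mul]
  have h5 : (∫ θ in c..m, Finv θ) + ∫ θ in m..d, Finv θ = ∫ θ in c..d, Finv θ :=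
    intervalIntegral.integral_add_adjacent_intervals
      (finv_intInt Finv hFc hcIcc hmIcc) (finv_intInt Finv hFc hmIcc hdIcc)
  have hdm : d - m = m - c := by simp only [hm]; ring
  rw [← hsplit, h1, h2, h3, h4, hdm]
  linarith

theorem wasserstein_loss_fraction_derivative
    (N : ℕ) (i : ℕ) (hi1 : 1 ≤ i) (hiN : i ≤ N - 1) (hN : 1 ≤ N)
    (τ : ℕ → ℝ) (hτ0 : τ 0 = 0) (hτN : τ N = 1)
    (hmono : ∀ j < N, τ j < τ (j + 1))
    (Finv : ℝ → ℝ)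
    (hFc : ContinuousOn Finv (Set.Icc 0 1))
    (hFm : MonotoneOn Finv (Set.Icc 0 1))
    (hFd1 : DifferentiableAt ℝ Finv ((τ (i - 1) + τ i) / 2))
    (hFd2 : DifferentiableAt ℝ Finv ((τ i + τ (i + 1)) / 2))
    (W : ℝ → ℝ)
    (hW : ∀ a, W a =
      ∑ j ∈ Finset.range N,
        ∫ θ in (Function.update τ i a j)..(Function.update τ i a (j + 1)),
          |Finv θ - Finv ((Function.update τ i a j + Function.update τ i a (j + 1)) / 2)|) :
    HasDerivAt W
      (2 * Finv (τ i) - Finv ((τ i + τ (i + 1)) / 2) - Finv ((τ (i - 1) + τ i) / 2))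
      (τ i) := by
  have hN2 : 2 ≤ N := by omega
  have hiN' : i + 1 ≤ N := by omega
  -- monotonicity of τ on {0,...,N}
  have tmono : ∀ a b : ℕ, a < b → b ≤ N → τ a < τ b := by
    intro a b hab hbN
    induction b with
    | zero => omega
    | succ n ih =>
      rcases Nat.lt_or_ge a n with h | h
      · exact lt_trans (ih h (by omega)) (hmono n (by omega))
      · have : a = n := by omega
        subst this
        exact hmono a (by omega)
    -- end
  have h0le : (0:ℝ) ≤ τ (i-1) := by
    rcases Nat.eq_or_lt_of_le (Nat.zero_le (i-1)) with h | h
    · rw [← h, hτ0]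
    · have := tmono 0 (i-1) h (by omega); linarith [hτ0 ▸ this]
  have hip : τ (i-1) < τ i := by
    have := tmono (i-1) i (by omega) (by omega); exact this
  have hin : τ i < τ (i+1) := tmono i (i+1) (by omega) (by omega)
  have h1ge : τ (i+1) ≤ 1 := by
    rcases Nat.eq_or_lt_of_le hiN' with h | h
    · rw [show i + 1 = N from h, hτN]
    · have := tmono (i+1) N h (le_refl N); linarith [hτN ▸ this]
  -- the base-point integral function
  set I : ℝ → ℝ := fun x => ∫ θ in (τ (i-1))..x, Finv θ with hI
  have hτim1 : τ (i-1) ∈ Set.Icc (0:ℝ) 1 := ⟨h0le, by linarith⟩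
  have hτi : τ i ∈ Set.Icc (0:ℝ) 1 := ⟨by linarith, by linarith⟩
  have hτip1 : τ (i+1) ∈ Set.Icc (0:ℝ) 1 := ⟨by linarith, h1ge⟩
  -- derivative of I at interior points
  have hIdiff : ∀ x₀ ∈ Set.Ioo (0:ℝ) 1, HasDerivAt I (Finv x₀) x₀ := by
    intro x₀ hx₀
    apply intervalIntegral.integral_hasDerivAt_right
    · exact finv_intInt Finv hFc hτim1 ⟨le_of_lt hx₀.1, le_of_lt hx₀.2⟩
    · exact (hFc.mono Set.Ioo_subset_Icc_self).stronglyMeasurableAtFilter isOpen_Ioo x₀ hx₀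
    · exact (hFc.mono Set.Ioo_subset_Icc_self).continuousAt (Ioo_mem_nhds hx₀.1 hx₀.2)
  have hτiIoo : τ i ∈ Set.Ioo (0:ℝ) 1 := ⟨by linarith, by linarith⟩
  have hm1Ioo : (τ (i-1) + τ i) / 2 ∈ Set.Ioo (0:ℝ) 1 := ⟨by linarith, by linarith⟩
  have hm2Ioo : (τ i + τ (i+1)) / 2 ∈ Set.Ioo (0:ℝ) 1 := ⟨by linarith, by linarith⟩
  -- the nice function G
  set Ks : ℝ := ∑ j ∈ ((Finset.range N).erase i).erase (i-1),
      ∫ θ in (τ j)..(τ (j+1)), |Finv θ - Finv ((τ j + τ (j+1)) / 2)| with hKs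
  set G : ℝ → ℝ := fun a =>
      (Ks + I (τ (i+1))) + 2 * I a - 2 * I ((τ (i-1) + a) / 2) - 2 * I ((a + τ (i+1)) / 2)
    with hG
  -- G has the right derivative
  have hGd : HasDerivAt G
      (2 * Finv (τ i) - Finv ((τ i + τ (i + 1)) / 2) - Finv ((τ (i - 1) + τ i) / 2)) (τ i) := by
    have d1 : HasDerivAt (fun a => I ((τ (i-1) + a) / 2)) (Finv ((τ (i-1) + τ i) / 2) * (1/2)) (τ i) := by
      have inner : HasDerivAt (fun a => (τ (i-1) + a) / 2) (1/2) (τ i) := by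
        have := ((hasDerivAt_id (τ i)).const_add (τ (i-1))).div_const 2
        simpa using this
      exact (hIdiff _ hm1Ioo).comp (τ i) inner
    have d2 : HasDerivAt (fun a => I ((a + τ (i+1)) / 2)) (Finv ((τ i + τ (i+1)) / 2) * (1/2)) (τ i) := by
      have inner : HasDerivAt (fun a => (a + τ (i+1)) / 2) (1/2) (τ i) := by
        have := ((hasDerivAt_id (τ i)).add_const (τ (i+1))).div_const 2
        simpa using this
      exact (hIdiff _ hm2Ioo).comp (τ i) inner
    have d0 : HasDerivAt I (Finv (τ i)) (τ i) := hIdiff _ hτiIoo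
    have := ((((d0.const_mul 2).const_add (Ks + I (τ (i+1)))).sub (d1.const_mul 2)).sub
      (d2.const_mul 2))
    convert this using 1
    · rfl
    · rfl
    · rfl
    ring
  -- W = G near τ i
  apply hGd.congr_of_eventuallyEq
  have hmem : Set.Ioo (τ (i-1)) (τ (i+1)) ∈ nhds (τ i) := Ioo_mem_nhds hip hin
  filter_upwards [hmem] with a ha
  obtain ⟨ha1, ha2⟩ := ha
  have haIcc : a ∈ Set.Icc (0:ℝ) 1 := ⟨by linarith, by linarith⟩
  have hm1Icc : (τ (i-1) + a) / 2 ∈ Set.Icc (0:ℝ) 1 := ⟨by linarith [haIcc.1], by linarith [haIcc.2]⟩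
  have hm2Icc : (a + τ (i+1)) / 2 ∈ Set.Icc (0:ℝ) 1 := ⟨by linarith [haIcc.1], by linarith⟩
  rw [hW a]
  set u : ℕ → ℝ := Function.update τ i a with hu
  have hui : u i = a := Function.update_self i a τ
  have hune : ∀ j, j ≠ i → u j = τ j := fun j hj => Function.update_of_ne hj a τ
  -- split the sum
  have hmem1 : i - 1 ∈ (Finset.range N).erase i := by
    rw [Finset.mem_erase, Finset.mem_range]; omega
  have hmemi : i ∈ Finset.range N := Finset.mem_range.mpr (by omega)
  have hsum : ∀ (f : ℕ → ℝ), ∑ j ∈ Finset.range N, f j =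
      f i + f (i-1) + ∑ j ∈ ((Finset.range N).erase i).erase (i-1), f j := by
    intro f
    rw [← Finset.add_sum_erase _ f hmemi, ← Finset.add_sum_erase _ f hmem1]
    ring
  rw [hsum]
  -- the constant part
  have hconst : ∑ j ∈ ((Finset.range N).erase i).erase (i-1),
      (∫ θ in (u j)..(u (j+1)), |Finv θ - Finv ((u j + u (j+1)) / 2)|) = Ks := by
    apply Finset.sum_congr rfl
    intro j hj
    rw [Finset.mem_erase, Finset.mem_erase] at hj
    have hji : j ≠ i := hj.2.1
    have hj1i : j + 1 ≠ i := by omega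
    rw [hune j hji, hune (j+1) hj1i]
  -- term i
  have him1 : i - 1 + 1 = i := by omega
  have hterm_i : (∫ θ in (u i)..(u (i+1)), |Finv θ - Finv ((u i + u (i+1)) / 2)|)
      = (I (τ (i+1)) - I a) - 2 * (I ((a + τ (i+1)) / 2) - I a) := by
    rw [hui, hune (i+1) (by omega)]
    rw [abs_integral_split Finv hFc hFm haIcc.1 (le_of_lt ha2) h1ge]
    have e1 : I a + ∫ θ in a..(τ (i+1)), Finv θ = I (τ (i+1)) :=
      intervalIntegral.integral_add_adjacent_intervals
        (finv_intInt Finv hFc hτim1 haIcc) (finv_intInt Finv hFc haIcc hτip1)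
    have e2 : I a + ∫ θ in a..((a + τ (i+1)) / 2), Finv θ = I ((a + τ (i+1)) / 2) :=
      intervalIntegral.integral_add_adjacent_intervals
        (finv_intInt Finv hFc hτim1 haIcc) (finv_intInt Finv hFc haIcc hm2Icc)
    linarith
  -- term i-1
  have hterm_im1 : (∫ θ in (u (i-1))..(u (i-1+1)), |Finv θ - Finv ((u (i-1) + u (i-1+1)) / 2)|)
      = I a - 2 * I ((τ (i-1) + a) / 2) := by
    rw [him1, hui, hune (i-1) (by omega)]
    rw [abs_integral_split Finv hFc hFm h0le (le_of_lt ha1) haIcc.2]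
  rw [hterm_i, hterm_im1, hconst, hG]
  ring
end

section
/- Let F⁻¹ be nondecreasing and continuous on [τ_i, τ_{i+1}]. Then the function c ↦ ∫_{τ_i}^{τ_{i+1}} |F⁻¹(θ) - c| dθ over c in the range of F⁻¹ is minimized at c = F⁻¹((τ_i + τ_{i+1})/2) among values c = F⁻¹(τ̂) with τ̂ ∈ [τ_i, τ_{i+1}]. -/
open intervalIntegral

lemma key_left (τi m τi1 : ℝ) (h1 : τi ≤ m) (h2 : m ≤ τi1)
    (hmid : m - τi = τi1 - m) (f : ℝ → ℝ)
    (hf : ContinuousOn f (Set.Icc τi τi1)) (a b : ℝ) (hab : a ≤ b)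
    (hle : ∀ θ ∈ Set.Icc τi m, f θ ≤ a) :
    (∫ θ in τi..τi1, |f θ - a|) ≤ ∫ θ in τi..τi1, |f θ - b| := by
  have hsub1 : Set.uIcc τi m ⊆ Set.Icc τi τi1 := by
    rw [Set.uIcc_of_le h1]; exact Set.Icc_subset_Icc le_rfl h2
  have hsub2 : Set.uIcc m τi1 ⊆ Set.Icc τi τi1 := by
    rw [Set.uIcc_of_le h2]; exact Set.Icc_subset_Icc h1 le_rfl
  have ia1 : IntervalIntegrable (fun θ => |f θ - a|) MeasureTheory.volume τi m :=
    (((hf.mono hsub1).sub continuousOn_const).abs).intervalIntegrable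
  have ia2 : IntervalIntegrable (fun θ => |f θ - a|) MeasureTheory.volume m τi1 :=
    (((hf.mono hsub2).sub continuousOn_const).abs).intervalIntegrable
  have ib1 : IntervalIntegrable (fun θ => |f θ - b|) MeasureTheory.volume τi m :=
    (((hf.mono hsub1).sub continuousOn_const).abs).intervalIntegrable
  have ib2 : IntervalIntegrable (fun θ => |f θ - b|) MeasureTheory.volume m τi1 :=
    (((hf.mono hsub2).sub continuousOn_const).abs).intervalIntegrable
  have split_a : (∫ θ in τi..τi1, |f θ - a|)
      = (∫ θ in τi..m, |f θ - a|) + ∫ θ in m..τi1, |f θ - a| :=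
    (intervalIntegral.integral_add_adjacent_intervals ia1 ia2).symm
  have split_b : (∫ θ in τi..τi1, |f θ - b|)
      = (∫ θ in τi..m, |f θ - b|) + ∫ θ in m..τi1, |f θ - b| :=
    (intervalIntegral.integral_add_adjacent_intervals ib1 ib2).symm
  have step1 : (∫ θ in τi..m, |f θ - a|)
      = (∫ θ in τi..m, |f θ - b|) - (b - a) * (m - τi) := by
    have hcong : (∫ θ in τi..m, |f θ - a|)
        = ∫ θ in τi..m, (|f θ - b| - (b - a)) := by
      apply intervalIntegral.integral_congr
      intro θ hθ
      rw [Set.uIcc_of_le h1] at hθ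
      have hfa := hle θ hθ
      show |f θ - a| = |f θ - b| - (b - a)
      rw [abs_of_nonpos (by linarith), abs_of_nonpos (by linarith)]
      ring
    rw [hcong, intervalIntegral.integral_sub ib1 intervalIntegrable_const,
      intervalIntegral.integral_const, smul_eq_mul]
    ring
  have step2 : (∫ θ in m..τi1, |f θ - a|)
      ≤ (∫ θ in m..τi1, |f θ - b|) + (b - a) * (τi1 - m) := by
    have hmono : (∫ θ in m..τi1, |f θ - a|)
        ≤ ∫ θ in m..τi1, (|f θ - b| + (b - a)) := by
      apply intervalIntegral.integral_mono_on h2 ia2 (ib2.add intervalIntegrable_const)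
      intro θ _
      have h3 : |f θ - a| = |(f θ - b) + (b - a)| := by congr 1; ring
      have h4 : |(f θ - b) + (b - a)| ≤ |f θ - b| + |b - a| := abs_add_le _ _
      have h5 : |b - a| = b - a := abs_of_nonneg (by linarith)
      linarith
    rw [intervalIntegral.integral_add ib2 intervalIntegrable_const,
      intervalIntegral.integral_const, smul_eq_mul] at hmono
    linarith [hmono]
  have heq : (b - a) * (m - τi) = (b - a) * (τi1 - m) := by rw [hmid]
  rw [split_a, split_b, step1]
  linarith

lemma key_right (τi m τi1 : ℝ) (h1 : τi ≤ m) (h2 : m ≤ τi1)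
    (hmid : m - τi = τi1 - m) (f : ℝ → ℝ)
    (hf : ContinuousOn f (Set.Icc τi τi1)) (a b : ℝ) (hab : b ≤ a)
    (hge : ∀ θ ∈ Set.Icc m τi1, a ≤ f θ) :
    (∫ θ in τi..τi1, |f θ - a|) ≤ ∫ θ in τi..τi1, |f θ - b| := by
  have hsub1 : Set.uIcc τi m ⊆ Set.Icc τi τi1 := by
    rw [Set.uIcc_of_le h1]; exact Set.Icc_subset_Icc le_rfl h2
  have hsub2 : Set.uIcc m τi1 ⊆ Set.Icc τi τi1 := by
    rw [Set.uIcc_of_le h2]; exact Set.Icc_subset_Icc h1 le_rfl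
  have ia1 : IntervalIntegrable (fun θ => |f θ - a|) MeasureTheory.volume τi m :=
    (((hf.mono hsub1).sub continuousOn_const).abs).intervalIntegrable
  have ia2 : IntervalIntegrable (fun θ => |f θ - a|) MeasureTheory.volume m τi1 :=
    (((hf.mono hsub2).sub continuousOn_const).abs).intervalIntegrable
  have ib1 : IntervalIntegrable (fun θ => |f θ - b|) MeasureTheory.volume τi m :=
    (((hf.mono hsub1).sub continuousOn_const).abs).intervalIntegrable
  have ib2 : IntervalIntegrable (fun θ => |f θ - b|) MeasureTheory.volume m τi1 :=
    (((hf.mono hsub2).sub continuousOn_const).abs).intervalIntegrable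
  have split_a : (∫ θ in τi..τi1, |f θ - a|)
      = (∫ θ in τi..m, |f θ - a|) + ∫ θ in m..τi1, |f θ - a| :=
    (intervalIntegral.integral_add_adjacent_intervals ia1 ia2).symm
  have split_b : (∫ θ in τi..τi1, |f θ - b|)
      = (∫ θ in τi..m, |f θ - b|) + ∫ θ in m..τi1, |f θ - b| :=
    (intervalIntegral.integral_add_adjacent_intervals ib1 ib2).symm
  have step1 : (∫ θ in m..τi1, |f θ - a|)
      = (∫ θ in m..τi1, |f θ - b|) - (a - b) * (τi1 - m) := by
    have hcong : (∫ θ in m..τi1, |f θ - a|)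
        = ∫ θ in m..τi1, (|f θ - b| - (a - b)) := by
      apply intervalIntegral.integral_congr
      intro θ hθ
      rw [Set.uIcc_of_le h2] at hθ
      have hfa := hge θ hθ
      show |f θ - a| = |f θ - b| - (a - b)
      rw [abs_of_nonneg (by linarith), abs_of_nonneg (by linarith)]
      ring
    rw [hcong, intervalIntegral.integral_sub ib2 intervalIntegrable_const,
      intervalIntegral.integral_const, smul_eq_mul]
    ring
  have step2 : (∫ θ in τi..m, |f θ - a|)
      ≤ (∫ θ in τi..m, |f θ - b|) + (a - b) * (m - τi) := by
    have hmono : (∫ θ in τi..m, |f θ - a|)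
        ≤ ∫ θ in τi..m, (|f θ - b| + (a - b)) := by
      apply intervalIntegral.integral_mono_on h1 ia1 (ib1.add intervalIntegrable_const)
      intro θ _
      have h3 : |f θ - a| = |(f θ - b) + (b - a)| := by congr 1; ring
      have h4 : |(f θ - b) + (b - a)| ≤ |f θ - b| + |b - a| := abs_add_le _ _
      have h5 : |b - a| = a - b := by rw [abs_sub_comm]; exact abs_of_nonneg (by linarith)
      linarith
    rw [intervalIntegral.integral_add ib1 intervalIntegrable_const,
      intervalIntegral.integral_const, smul_eq_mul] at hmono
    linarith [hmono]
  have heq : (a - b) * (m - τi) = (a - b) * (τi1 - m) := by rw [hmid]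
  rw [split_a, split_b, step1]
  linarith

theorem midpoint_minimizes_interval_wasserstein
    (τi τi1 : ℝ) (h : τi < τi1)
    (Finv : ℝ → ℝ)
    (hFc : ContinuousOn Finv (Set.Icc τi τi1))
    (hFm : MonotoneOn Finv (Set.Icc τi τi1)) :
    ∀ τhat ∈ Set.Icc τi τi1,
      (∫ θ in τi..τi1, |Finv θ - Finv ((τi + τi1) / 2)|) ≤
        ∫ θ in τi..τi1, |Finv θ - Finv τhat| := by
  intro τhat hτhat
  set m := (τi + τi1) / 2 with hm
  have hm1 : τi ≤ m := by rw [hm]; linarith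
  have hm2 : m ≤ τi1 := by rw [hm]; linarith
  have hmem : m ∈ Set.Icc τi τi1 := ⟨hm1, hm2⟩
  have hmid : m - τi = τi1 - m := by rw [hm]; ring
  rcases le_total m τhat with hc | hc
  · apply key_left τi m τi1 hm1 hm2 hmid Finv hFc _ _ (hFm hmem hτhat hc)
    intro θ hθ
    exact hFm ⟨hθ.1, le_trans hθ.2 hm2⟩ hmem hθ.2
  · apply key_right τi m τi1 hm1 hm2 hmid Finv hFc _ _ (hFm hτhat hmem hc)
    intro θ hθ
    exact hFm hmem ⟨le_trans hm1 hθ.1, hθ.2⟩ hθ.1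
end
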